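/- Let $U$ and $Q$ be finite-dimensional complex vector spaces and $\widetilde{\mathcal A} = \{u \otimes q + c\,u^2 : u \in U, q \in Q, c \in \mathbb{C}\} \subset (U \otimes Q) \oplus S^2U$. For $\beta = u \otimes q + u^2$ with $u \neq 0$, $q \neq 0$, the set $T_\beta = \{u \otimes q' + u' \otimes q + 2\,u \circ u' : u' \in U,\ q' \in Q\}$ is a linear subspace of dimension $\dim U + \dim Q$ containing the velocity vector at $t=0$ of every smooth curve in $\widetilde{\mathcal A}$ through $\beta$. -/

import Mathlib

open Module

/-- Ambient space modelling `(U ⊗ Q) ⊕ S²U` with `U = ℂᵏ`, `Q = ℂᵐ`. -/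
abbrev Amb (k m : ℕ) := (Fin k → Fin m → ℂ) × (Fin k → Fin k → ℂ)

/-- `u ⊗ q`. -/
def outer {k m : ℕ} (u : Fin k → ℂ) (q : Fin m → ℂ) : Fin k → Fin m → ℂ :=
  fun i j => u i * q j

/-- `u² ∈ S²U`. -/
def sqv {k : ℕ} (u : Fin k → ℂ) : Fin k → Fin k → ℂ := fun i j => u i * u j

/-- `2 u ∘ u' ∈ S²U` (twice the symmetric product). -/
def symTwo {k : ℕ} (u u' : Fin k → ℂ) : Fin k → Fin k → ℂ :=
  fun i j => u i * u' j + u' i * u j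

/-- The linearization map `(u', q') ↦ (u ⊗ q' + u' ⊗ q, 2 u ∘ u')`. -/
def tanMap {k m : ℕ} (u : Fin k → ℂ) (q : Fin m → ℂ) :
    ((Fin k → ℂ) × (Fin m → ℂ)) →ₗ[ℂ] Amb k m where
  toFun p := (outer u p.2 + outer p.1 q, symTwo u p.1)
  map_add' p p' := by
    ext i j <;> simp [outer, symTwo] <;> ring
  map_smul' c p := by
    ext i j <;> simp [outer, symTwo] <;> ring

lemma tanMap_inj {k m : ℕ} (u : Fin k → ℂ) (q : Fin m → ℂ) (hu : u ≠ 0) (hq : q ≠ 0) :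
    Function.Injective (tanMap u q) := by
  rw [← LinearMap.ker_eq_bot]
  rw [Submodule.eq_bot_iff]
  rintro ⟨u', q'⟩ h
  rw [LinearMap.mem_ker] at h
  obtain ⟨i0, hi0⟩ := Function.ne_iff.mp hu
  have h1 := congrArg Prod.fst h
  have h2 := congrArg Prod.snd h
  simp only [tanMap, LinearMap.coe_mk, AddHom.coe_mk] at h1 h2
  have hu' : u' = 0 := by
    have hd : u i0 * u' i0 + u' i0 * u i0 = 0 := congrFun (congrFun h2 i0) i0
    have hui0 : u' i0 = 0 := by
      have : u i0 * u' i0 = 0 := by linear_combination hd / 2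
      rcases mul_eq_zero.mp this with h | h
      · exact absurd h hi0
      · exact h
    funext j
    have hd2 : u i0 * u' j + u' i0 * u j = 0 := congrFun (congrFun h2 i0) j
    rw [hui0] at hd2
    have : u i0 * u' j = 0 := by linear_combination hd2
    rcases mul_eq_zero.mp this with h | h
    · exact absurd h hi0
    · exact h
  have hq' : q' = 0 := by
    funext j
    have hd : (outer u q' + outer u' q) i0 j = 0 := congrFun (congrFun h1 i0) j
    simp [outer, hu'] at hd
    rcases hd with h | h
    · exact absurd h hi0
    · exact h
  simp [hu', hq', Prod.ext_iff]

theorem tangent_space_of_vmrt_cone_at_generic_point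
    (k m : ℕ) (u : Fin k → ℂ) (q : Fin m → ℂ) (hu : u ≠ 0) (hq : q ≠ 0) :
    (∃ T : Submodule ℂ (Amb k m),
        (T : Set (Amb k m)) =
          {x | ∃ (u' : Fin k → ℂ) (q' : Fin m → ℂ),
                x = (outer u q' + outer u' q, symTwo u u')} ∧
        finrank ℂ T = k + m) ∧
    (∀ (u_ : ℂ → Fin k → ℂ) (q_ : ℂ → Fin m → ℂ) (c_ : ℂ → ℂ)
        (γ : ℂ → Amb k m) (v : Amb k m),
        (∀ t, γ t = (outer (u_ t) (q_ t), c_ t • sqv (u_ t))) →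
        u_ 0 = u → q_ 0 = q → c_ 0 = 1 →
        DifferentiableAt ℂ u_ 0 → DifferentiableAt ℂ q_ 0 → DifferentiableAt ℂ c_ 0 →
        HasDerivAt γ v 0 →
        v ∈ {x : Amb k m | ∃ (u' : Fin k → ℂ) (q' : Fin m → ℂ),
                x = (outer u q' + outer u' q, symTwo u u')}) := by
  constructor
  · refine ⟨LinearMap.range (tanMap u q), ?_, ?_⟩
    · ext x
      simp only [SetLike.mem_coe, LinearMap.mem_range, Set.mem_setOf_eq, Prod.exists]
      constructor
      · rintro ⟨u', q', rfl⟩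
        exact ⟨u', q', rfl⟩
      · rintro ⟨u', q', rfl⟩
        exact ⟨u', q', rfl⟩
    · rw [LinearMap.finrank_range_of_inj (tanMap_inj u q hu hq)]
      simp
  · intro u_ q_ c_ γ v hγ hu0 hq0 hc0 hdu hdq hdc hdv
    set u' := deriv u_ 0 with hu'
    set q' := deriv q_ 0 with hq'
    set c' := deriv c_ 0 with hc'
    have hdu' : HasDerivAt u_ u' 0 := hdu.hasDerivAt
    have hdq' : HasDerivAt q_ q' 0 := hdq.hasDerivAt
    have hdc' : HasDerivAt c_ c' 0 := hdc.hasDerivAt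
    have hdui : ∀ i, HasDerivAt (fun t => u_ t i) (u' i) 0 := fun i =>
      (hasDerivAt_pi.mp hdu') i
    have hdqi : ∀ j, HasDerivAt (fun t => q_ t j) (q' j) 0 := fun j =>
      (hasDerivAt_pi.mp hdq') j
    have hder : HasDerivAt γ
        ((fun i j => u' i * q j + u i * q' j),
         (fun i j => c' * (u i * u j) + (u i * u' j + u' i * u j))) 0 := by
      have h1 : HasDerivAt (fun t => outer (u_ t) (q_ t))
          (fun i j => u' i * q j + u i * q' j) 0 := by
        rw [hasDerivAt_pi]
        intro i
        rw [hasDerivAt_pi]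
        intro j
        have : HasDerivAt (fun t => u_ t i * q_ t j) _ 0 := (hdui i).mul (hdqi j)
        simpa [outer, hu0, hq0, mul_comm] using this
      have h2 : HasDerivAt (fun t => c_ t • sqv (u_ t))
          (fun i j => c' * (u i * u j) + (u i * u' j + u' i * u j)) 0 := by
        rw [hasDerivAt_pi]
        intro i
        rw [hasDerivAt_pi]
        intro j
        have : HasDerivAt (fun t => c_ t * (u_ t i * u_ t j))
            (c' * (u_ 0 i * u_ 0 j) + c_ 0 * (u_ 0 i * u' j + u' i * u_ 0 j)) 0 := by
          have hprod : HasDerivAt (fun t => u_ t i * u_ t j) _ 0 := (hdui i).mul (hdui j)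
          have : HasDerivAt (fun t => c_ t * (u_ t i * u_ t j)) _ 0 := hdc'.mul hprod
          convert this using 1
          ring
        simpa [sqv, hu0, hc0, Pi.smul_apply, smul_eq_mul] using this
      have := h1.prodMk h2
      exact this.congr_deriv rfl |>.congr_of_eventuallyEq
        (Filter.Eventually.of_forall fun t => (hγ t))
    have hv : v = ((fun i j => u' i * q j + u i * q' j),
        (fun i j => c' * (u i * u j) + (u i * u' j + u' i * u j))) :=
      hdv.unique hder
    refine ⟨(c' / 2) • u + u', q' - (c' / 2) • q, ?_⟩
    rw [hv]
    ext i j <;> simp [outer, symTwo, Pi.smul_apply, smul_eq_mul] <;> ring
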